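/- Every uniformly locally path equi-connected metric space is uniformly locally chain equi-connected. -/
import Mathlib


open Set

/-- A continuity modulus: a nondecreasing `ω : (0,∞) → (0,∞)` with `ω(t) → 0` as `t → 0⁺`. -/
def ContinuityModulus (ω : ℝ → ℝ) : Prop :=
  MonotoneOn ω (Set.Ioi 0) ∧ (∀ t : ℝ, 0 < t → 0 < ω t) ∧
    Filter.Tendsto ω (nhdsWithin 0 (Set.Ioi 0)) (nhds 0)

/-- `c` is an `η`-chain of length `l` linking `x` and `y`. -/
def IsEtaChain {X : Type*} [MetricSpace X] (η : ℝ) (l : ℕ)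
    (c : Fin (l + 1) → X) (x y : X) : Prop :=
  c 0 = x ∧ c (Fin.last l) = y ∧ ∀ i : Fin l, dist (c i.castSucc) (c i.succ) < η

/-- `X` is uniformly locally path equi-connected. -/
def ULPathEquiConnected (X : Type*) [MetricSpace X] : Prop :=
  ∃ ε₀ : ℝ, 0 < ε₀ ∧ ∃ ω : ℝ → ℝ, ContinuityModulus ω ∧
    ∀ x y : X, dist x y < ε₀ → ∃ f : ℝ → X,
      ContinuousOn f (Icc 0 (dist x y)) ∧ f 0 = x ∧ f (dist x y) = y ∧
      ∀ s ∈ Icc 0 (dist x y), ∀ t ∈ Icc 0 (dist x y), ∀ u : ℝ, 0 < u →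
        |s - t| ≤ u → dist (f s) (f t) ≤ ω u

/-- `X` is uniformly locally chain equi-connected. -/
def ULChainEquiConnected (X : Type*) [MetricSpace X] : Prop :=
  ∀ ε : ℝ, 0 < ε → ∃ δ : ℝ, 0 < δ ∧ ∀ η : ℝ, 0 < η → ∃ l : ℕ,
    ∀ x y : X, dist x y < δ →
      ∃ l' : ℕ, l' ≤ l ∧ ∃ c : Fin (l' + 1) → X, IsEtaChain η l' c x y ∧
        ∀ i j : Fin (l' + 1), dist (c i) (c j) < ε

/-- From the tendsto condition, find small positive `t` with `ω t < ε`. -/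
lemma exists_small_of_modulus {ω : ℝ → ℝ}
    (h3 : Filter.Tendsto ω (nhdsWithin 0 (Set.Ioi 0)) (nhds 0))
    {ε : ℝ} (hε : 0 < ε) : ∃ t : ℝ, 0 < t ∧ ω t < ε := by
  have hA : ∀ᶠ t in nhdsWithin (0:ℝ) (Set.Ioi 0), ω t < ε := h3.eventually (gt_mem_nhds hε)
  have hB : ∀ᶠ t in nhdsWithin (0:ℝ) (Set.Ioi 0), t ∈ Set.Ioi (0:ℝ) :=
    eventually_mem_nhdsWithin
  obtain ⟨t, ht1, ht2⟩ := (hA.and hB).exists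
  exact ⟨t, ht2, ht1⟩

/-- Every uniformly locally path equi-connected metric space is uniformly locally
chain equi-connected. -/
theorem ulpec_implies_ulcec {X : Type*} [MetricSpace X]
    (h : ULPathEquiConnected X) : ULChainEquiConnected X := by
  obtain ⟨ε₀, hε₀, ω, ⟨hmono, hpos, htend⟩, hpath⟩ := h
  intro ε hε
  obtain ⟨δ₁, hδ₁pos, hδ₁ε⟩ := exists_small_of_modulus htend hε
  refine ⟨min δ₁ ε₀, lt_min hδ₁pos hε₀, ?_⟩
  intro η hη
  obtain ⟨u, hupos, huη⟩ := exists_small_of_modulus htend hη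
  refine ⟨⌈min δ₁ ε₀ / u⌉₊, ?_⟩
  intro x y hxy
  rcases eq_or_lt_of_le (dist_nonneg (x := x) (y := y)) with hd0 | hdpos
  · -- x = y
    have hxy0 : x = y := by
      rw [← dist_eq_zero]; exact hd0.symm
    refine ⟨0, Nat.zero_le _, fun _ => x, ⟨rfl, hxy0, fun i => i.elim0⟩, ?_⟩
    intro i j; simpa using hε
  · set d := dist x y with hd
    obtain ⟨f, hfc, hf0, hfd, hfmod⟩ := hpath x y (lt_of_lt_of_le hxy (min_le_right _ _))
    set l' : ℕ := ⌈d / u⌉₊ with hl'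
    have hl'le : l' ≤ ⌈min δ₁ ε₀ / u⌉₊ :=
      Nat.ceil_le_ceil (by gcongr)
    have hl'pos : 0 < l' := Nat.ceil_pos.mpr (div_pos hdpos hupos)
    have hl'R : (0:ℝ) < l' := by exact_mod_cast hl'pos
    -- points of the chain
    refine ⟨l', hl'le, fun i => f (i * (d / l')), ?_, ?_⟩
    · have hmem : ∀ i : Fin (l' + 1), (i : ℝ) * (d / l') ∈ Icc 0 d := by
        intro i
        constructor
        · positivity
        · have hi : (i : ℝ) ≤ l' := by
            exact_mod_cast Nat.lt_succ_iff.mp i.isLt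
          calc (i : ℝ) * (d / l') ≤ l' * (d / l') :=
                mul_le_mul_of_nonneg_right hi (by positivity)
            _ = d := by field_simp
      refine ⟨by simpa using hf0, ?_, ?_⟩
      · simp only [Fin.val_last]
        have : (l' : ℝ) * (d / l') = d := by field_simp
        rw [this]; exact hfd
      · intro i
        have hstep : |(i.castSucc : ℝ) * (d / l') - (i.succ : ℝ) * (d / l')| ≤ u := by
          have : (i.castSucc : ℝ) * (d / l') - (i.succ : ℝ) * (d / l') = -(d / l') := by
            push_cast [Fin.val_succ, Fin.coe_castSucc]
            ring
          rw [this, abs_neg, abs_of_nonneg (by positivity)]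
          rw [div_le_iff₀ hl'R]
          calc d ≤ (d / u) * u := by rw [div_mul_cancel₀]; exact hupos.ne'
            _ ≤ (l' : ℝ) * u := by
                apply mul_le_mul_of_nonneg_right (Nat.le_ceil _) hupos.le
            _ = u * l' := mul_comm _ _
        calc dist (f ((i.castSucc : ℝ) * (d / l'))) (f ((i.succ : ℝ) * (d / l')))
            ≤ ω u := hfmod _ (hmem i.castSucc) _ (hmem i.succ) u hupos hstep
          _ < η := huη
    · intro i j
      have hmem : ∀ i : Fin (l' + 1), (i : ℝ) * (d / l') ∈ Icc 0 d := by
        intro i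
        constructor
        · positivity
        · have hi : (i : ℝ) ≤ l' := by
            exact_mod_cast Nat.lt_succ_iff.mp i.isLt
          calc (i : ℝ) * (d / l') ≤ l' * (d / l') :=
                mul_le_mul_of_nonneg_right hi (by positivity)
            _ = d := by field_simp
      have hdiff : |(i : ℝ) * (d / l') - (j : ℝ) * (d / l')| ≤ δ₁ := by
        have h1 := (hmem i).1; have h2 := (hmem i).2
        have h3 := (hmem j).1; have h4 := (hmem j).2
        rw [abs_sub_le_iff]
        constructor <;> nlinarith [lt_of_lt_of_le hxy (min_le_left δ₁ ε₀)]
      calc dist (f ((i : ℝ) * (d / l'))) (f ((j : ℝ) * (d / l')))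
          ≤ ω δ₁ := hfmod _ (hmem i) _ (hmem j) δ₁ hδ₁pos hdiff
        _ < ε := hδ₁ε
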